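/- Let U be a partial multifunction on ℕ. If U is computably transparent, then the operation j_U is monotone; if U is inflationary, then j_U is inflationary; if U is idempotent, then j_U is idempotent. In particular, if U is computably transparent, inflationary, and idempotent, then j_U is a Lawvere–Tierney topology. -/

import Mathlib

namespace KleeneOracle

/-- `e ∗ x`: application of the `e`-th partial computable function on ℕ. -/
def ap (e x : ℕ) : Part ℕ :=
  Nat.Partrec.Code.eval (Denumerable.ofNat Nat.Partrec.Code e) x

/-- `e ∗ A := {e ∗ a : a ∈ A}`. -/
def apSet (e : ℕ) (A : Set ℕ) : Set ℕ := {z | ∃ a ∈ A, z ∈ ap e a}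

/-- A partial multifunction on ℕ. -/
abbrev Multifun := ℕ → Part (Set ℕ)

def Transparent (U : Multifun) : Prop :=
  ∃ u : ℕ, ∀ (e x : ℕ) (A : Set ℕ), A ∈ U x → (∀ y ∈ A, (ap e y).Dom) →
    ∃ c ∈ ap u e, ∃ d ∈ ap c x, ∃ B ∈ U d, B ⊆ apSet e A

def Inflationary (U : Multifun) : Prop :=
  ∃ η : ℕ, ∀ x : ℕ, ∃ c ∈ ap η x, ∃ B ∈ U c, B ⊆ {x}

def mcomp (g f : Multifun) : Multifun := fun x =>
  ⟨∃ A ∈ f x, ∀ y ∈ A, (g y).Dom,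
   fun _ => {z | ∃ A ∈ f x, ∃ y ∈ A, ∃ B ∈ g y, z ∈ B}⟩

def Idempotent (U : Multifun) : Prop :=
  ∃ μ : ℕ, ∀ (x : ℕ) (A : Set ℕ), A ∈ mcomp U U x →
    ∃ c ∈ ap μ x, ∃ B ∈ U c, B ⊆ A

def mRed (f g : Multifun) : Prop :=
  ∃ e : ℕ, ∀ (x : ℕ) (A : Set ℕ), A ∈ f x →
    ∃ c ∈ ap e x, ∃ B ∈ g c, B ⊆ A

def wRed (f g : Multifun) : Prop :=
  ∃ em ep : ℕ, ∀ (x : ℕ) (A : Set ℕ), A ∈ f x →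
    ∃ c ∈ ap em x, ∃ B ∈ g c, ∀ y ∈ B, ∃ z ∈ ap ep (Nat.pair x y), z ∈ A

def Weih (g : Multifun) : Multifun := fun w =>
  ⟨∃ c ∈ ap w.unpair.1 w.unpair.2.unpair.2, ∃ B ∈ g c,
     ∀ y ∈ B, (ap w.unpair.2.unpair.1 (Nat.pair w.unpair.2.unpair.2 y)).Dom,
   fun _ => {z | ∃ c ∈ ap w.unpair.1 w.unpair.2.unpair.2, ∃ B ∈ g c,
     ∃ y ∈ B, z ∈ ap w.unpair.2.unpair.1 (Nat.pair w.unpair.2.unpair.2 y)}⟩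

def idsq (g : Multifun) : Multifun := fun w =>
  if w.unpair.1 = 0 then Part.some {w.unpair.2}
  else if w.unpair.1 = 1 then g w.unpair.2
  else Part.none

def pWeih (g : Multifun) : Multifun := Weih (idsq g)

def pwRed (f g : Multifun) : Prop := wRed f (idsq g)

def Med (Q : Set ℕ) : Multifun := fun e =>
  ⟨∀ a ∈ Q, (ap e a).Dom, fun _ => apSet e Q⟩

def MedRed (P Q : Set ℕ) : Prop :=
  ∃ e : ℕ, (∀ a ∈ Q, (ap e a).Dom) ∧ apSet e Q ⊆ P

def constMF (P : Set ℕ) : Multifun := fun _ => Part.some P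

def imp (p q : Set ℕ) : Set ℕ := {e | ∀ x ∈ p, ∃ z ∈ ap e x, z ∈ q}

def OpMonotone (j : Set ℕ → Set ℕ) : Prop :=
  ∃ u : ℕ, ∀ p q : Set ℕ, ∀ a ∈ imp p q, ∃ c ∈ ap u a, c ∈ imp (j p) (j q)

def OpInflationary (j : Set ℕ → Set ℕ) : Prop :=
  ∃ e : ℕ, ∀ p : Set ℕ, e ∈ imp p (j p)

def OpIdempotent (j : Set ℕ → Set ℕ) : Prop :=
  ∃ e : ℕ, ∀ p : Set ℕ, e ∈ imp (j (j p)) (j p)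

def LawvereTierney (j : Set ℕ → Set ℕ) : Prop :=
  OpMonotone j ∧ OpInflationary j ∧ OpIdempotent j

def jU (U : Multifun) (p : Set ℕ) : Set ℕ := {x | ∃ A ∈ U x, A ⊆ p}

def SingleValued (U : Multifun) : Prop := ∀ x : ℕ, ∀ A ∈ U x, ∃ y : ℕ, A = {y}

def presInter (j : Set ℕ → Set ℕ) : Prop :=
  ∀ (ι : Type) [Nonempty ι] (p : ι → Set ℕ), j (⋂ i, p i) = ⋂ i, j (p i)

def presUnion (j : Set ℕ → Set ℕ) : Prop :=
  ∀ (ι : Type) (p : ι → Set ℕ), j (⋃ i, p i) = ⋃ i, j (p i)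

def Uop (j : Set ℕ → Set ℕ) : Multifun := fun x =>
  ⟨∃ p : Set ℕ, x ∈ j p, fun _ => ⋂₀ {p : Set ℕ | x ∈ j p}⟩

def mMorphism (e : ℕ) (f g : Multifun) : Prop :=
  ∀ (x : ℕ) (A : Set ℕ), A ∈ f x → ∃ c ∈ ap e x, ∃ B ∈ g c, B ⊆ A

def rMorphism (e : ℕ) (j k : Set ℕ → Set ℕ) : Prop :=
  ∀ p : Set ℕ, e ∈ imp (j p) (k p)

def rRed (j k : Set ℕ → Set ℕ) : Prop := ∃ e : ℕ, rMorphism e j k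



open Nat.Partrec (Code)
open Nat.Partrec.Code

private lemma ap_partrec : Partrec₂ ap :=
  eval_part.comp ((Computable.ofNat _).comp Computable.fst) Computable.snd

/-- Key s-m-n style lemma: there is a total code `u'` computing, from `a`, a code
for `x ↦ (u ∗ a) ∗ x`. -/
private lemma smn_ap (u : ℕ) : ∃ u' : ℕ, ∃ G : ℕ → ℕ,
    (∀ a : ℕ, G a ∈ ap u' a) ∧
    (∀ a x : ℕ, ap (G a) x = (ap u a).bind fun c0 => ap c0 x) := by
  have hF : Partrec fun n : ℕ => (ap u n.unpair.1).bind fun c0 => ap c0 n.unpair.2 := by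
    have h1 : Partrec fun n : ℕ => ap u n.unpair.1 :=
      ap_partrec.comp (Computable.const u)
        (Computable.fst.comp Computable.unpair)
    have h2 : Partrec₂ fun (n c0 : ℕ) => ap c0 n.unpair.2 :=
      ap_partrec.comp Computable.snd
        ((Computable.snd.comp Computable.unpair).comp Computable.fst)
    exact h1.bind h2
  obtain ⟨cF, hcF⟩ := exists_code.1 (Partrec.nat_iff.1 hF)
  have hG : Computable fun a : ℕ => Encodable.encode (cF.curry a) :=
    (Primrec.encode.comp (primrec₂_curry.comp (Primrec.const cF) Primrec.id)).to_comp
  obtain ⟨cG, hcG⟩ := exists_code.1 (Partrec.nat_iff.1 hG)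
  refine ⟨Encodable.encode cG, fun a => Encodable.encode (cF.curry a), ?_, ?_⟩
  · intro a
    show _ ∈ Nat.Partrec.Code.eval (Denumerable.ofNat Code (Encodable.encode cG)) a
    rw [Denumerable.ofNat_encode, hcG]
    simp
  · intro a x
    show Nat.Partrec.Code.eval (Denumerable.ofNat Code (Encodable.encode (cF.curry a))) x = _
    rw [Denumerable.ofNat_encode, eval_curry, hcF]
    simp [ap]

/-- If `U` is computably transparent then `j_U` is monotone; if `U` is
inflationary then so is `j_U`; if `U` is idempotent then so is `j_U`.  In particular,
if `U` is computably transparent, inflationary and idempotent, then `j_U` is a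
Lawvere–Tierney topology. -/
theorem transparent_to_modality (U : Multifun) :
    (Transparent U → OpMonotone (jU U)) ∧
    (Inflationary U → OpInflationary (jU U)) ∧
    (Idempotent U → OpIdempotent (jU U)) ∧
    (Transparent U → Inflationary U → Idempotent U → LawvereTierney (jU U)) := by
  have hmon : Transparent U → OpMonotone (jU U) := by
    rintro ⟨u, hu⟩
    obtain ⟨u', G, hG1, hG2⟩ := smn_ap u
    refine ⟨u', fun p q a ha => ⟨G a, hG1 a, ?_⟩⟩
    rintro x ⟨A, hAx, hAp⟩
    have hdom : ∀ y ∈ A, (ap a y).Dom := by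
      intro y hy
      obtain ⟨z, hz, _⟩ := ha y (hAp hy)
      exact Part.dom_iff_mem.2 ⟨z, hz⟩
    obtain ⟨c0, hc0, d, hd, B, hB, hBsub⟩ := hu a x A hAx hdom
    refine ⟨d, ?_, B, hB, ?_⟩
    · rw [hG2 a x]
      exact Part.mem_bind_iff.2 ⟨c0, hc0, hd⟩
    · intro z hz
      obtain ⟨y, hyA, hzy⟩ := hBsub hz
      obtain ⟨z', hz', hz'q⟩ := ha y (hAp hyA)
      rwa [Part.mem_unique hzy hz']
  have hinf : Inflationary U → OpInflationary (jU U) := by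
    rintro ⟨η, hη⟩
    refine ⟨η, fun p x hx => ?_⟩
    obtain ⟨c, hc, B, hB, hBsub⟩ := hη x
    exact ⟨c, hc, B, hB, fun z hz => by rwa [Set.mem_singleton_iff.1 (hBsub hz)]⟩
  have hide : Idempotent U → OpIdempotent (jU U) := by
    rintro ⟨μ, hμ⟩
    refine ⟨μ, fun p x hx => ?_⟩
    obtain ⟨A, hAx, hAjp⟩ := hx
    have hdom : (mcomp U U x).Dom := ⟨A, hAx, fun y hy => by
      obtain ⟨By, hBy, _⟩ := hAjp hy
      exact Part.dom_iff_mem.2 ⟨By, hBy⟩⟩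
    have hmem : (mcomp U U x).get hdom ∈ mcomp U U x := Part.get_mem hdom
    obtain ⟨c, hc, B, hB, hBsub⟩ := hμ x _ hmem
    refine ⟨c, hc, B, hB, fun z hz => ?_⟩
    obtain ⟨A', hA'x, y, hyA', By, hBy, hzBy⟩ := hBsub hz
    have hA' : A' = A := Part.mem_unique hA'x hAx
    obtain ⟨Cy, hCy, hCyp⟩ := hAjp (hA' ▸ hyA')
    exact hCyp (Part.mem_unique hBy hCy ▸ hzBy)
  exact ⟨hmon, hinf, hide, fun ht hi hid => ⟨hmon ht, hinf hi, hide hid⟩⟩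

end KleeneOracle
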